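/- Let G be the group with presentation ⟨σ₁, σ₂ ∣ (σ₁σ₂)³ = (σ₂σ₁)³, (σ₁σ₂)³ = 1⟩ (the quotient of the braid group of type G₂ by its center) and let φ : G → K be a group homomorphism into a group K. If the three elements φ(σ₁), φ(σ₂σ₁σ₂⁻¹) and φ(σ₂σ₁σ₂σ₁σ₂⁻¹σ₁⁻¹σ₂⁻¹) of K freely generate a free subgroup of rank 3 (i.e., the group homomorphism from the free group on three generators sending the generators to these three elements is injective), then φ is injective. -/

import Mathlib

/-- Relators of the quotient of the braid group of type `G₂` by its center:
`(σ₁σ₂)³(σ₂σ₁)⁻³` and `(σ₁σ₂)³`. -/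
def G2QuotRels : Set (FreeGroup (Fin 2)) :=
  { (FreeGroup.of 0 * FreeGroup.of 1) ^ 3 * ((FreeGroup.of 1 * FreeGroup.of 0) ^ 3)⁻¹,
    (FreeGroup.of 0 * FreeGroup.of 1) ^ 3 }

theorem stmt_2 {K : Type*} [Group K] (φ : PresentedGroup G2QuotRels →* K)
    (hfree : Function.Injective (FreeGroup.lift
      (![φ (PresentedGroup.of 0),
         φ (PresentedGroup.of 1 * PresentedGroup.of 0 * (PresentedGroup.of 1)⁻¹),
         φ (PresentedGroup.of 1 * PresentedGroup.of 0 * PresentedGroup.of 1 *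
             PresentedGroup.of 0 * (PresentedGroup.of 1)⁻¹ * (PresentedGroup.of 0)⁻¹ *
             (PresentedGroup.of 1)⁻¹)] :
        Fin 3 → K))) :
    Function.Injective φ := by
  set s0 : PresentedGroup G2QuotRels := PresentedGroup.of 0 with hs0
  set s1 : PresentedGroup G2QuotRels := PresentedGroup.of 1 with hs1
  set b : PresentedGroup G2QuotRels := s1 * s0 * s1⁻¹ with hb
  set c : PresentedGroup G2QuotRels := s1 * s0 * s1 * s0 * s1⁻¹ * s0⁻¹ * s1⁻¹ with hc
  -- the relator
  have hr : (s0 * s1) ^ 3 = 1 := by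
    have h : (s0 * s1) ^ 3
        = PresentedGroup.mk G2QuotRels ((FreeGroup.of 0 * FreeGroup.of 1) ^ 3) := by
      rw [map_pow, map_mul]; rfl
    rw [h]
    exact (QuotientGroup.eq_one_iff _).mpr
      (Subgroup.subset_normalClosure (Or.inr rfl))
  have hr2 : s0 * s1 * s0 * s1 * s0 * s1 = 1 := by
    rw [← hr, pow_succ, pow_succ, pow_one]; group
  -- consequences of the relator
  have e1 : s1 * s0 * s1 = s0⁻¹ * s1⁻¹ * s0⁻¹ := by
    have h : s1 * s0 * s1 = s0⁻¹ * (s0 * s1 * s0 * s1 * s0 * s1) * s1⁻¹ * s0⁻¹ := by group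
    rw [h, hr2]; group
  have e2 : s0 * s1 * s0 = s1⁻¹ * s0⁻¹ * s1⁻¹ := by
    have h : s0 * s1 * s0 = (s0 * s1 * s0 * s1 * s0 * s1) * s1⁻¹ * s0⁻¹ * s1⁻¹ := by group
    rw [h, hr2]; group
  have e3 : s0 * s1 * s0 * s1 * s0 = s1⁻¹ := by
    have h : s0 * s1 * s0 * s1 * s0 = (s0 * s1 * s0 * s1 * s0 * s1) * s1⁻¹ := by group
    rw [h, hr2]; group
  have e4 : s0 * s1 * s0 * s1 = s1⁻¹ * s0⁻¹ := by
    have h : s0 * s1 * s0 * s1 = (s0 * s1 * s0 * s1 * s0 * s1) * s1⁻¹ * s0⁻¹ := by group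
    rw [h, hr2]; group
  -- conjugation by s1
  have k1 : s1 * s0 * s1⁻¹ = b := hb.symm
  have k2 : s1 * b * s1⁻¹ = b⁻¹ * c * b := by rw [hb, hc]; group
  have k3 : s1 * c * s1⁻¹ = b⁻¹ * s0 * b := by
    rw [hb, hc]
    calc s1 * (s1 * s0 * s1 * s0 * s1⁻¹ * s0⁻¹ * s1⁻¹) * s1⁻¹
        = s1 * (s1 * s0 * s1) * s0 * s1⁻¹ * s0⁻¹ * s1⁻¹ * s1⁻¹ := by group
      _ = s1 * (s0⁻¹ * s1⁻¹ * s0⁻¹) * s0 * s1⁻¹ * s0⁻¹ * s1⁻¹ * s1⁻¹ := by rw [e1]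
      _ = s1 * s0⁻¹ * s1⁻¹ * (s1⁻¹ * s0⁻¹ * s1⁻¹) * s1⁻¹ := by group
      _ = s1 * s0⁻¹ * s1⁻¹ * (s0 * s1 * s0) * s1⁻¹ := by rw [e2]
      _ = (s1 * s0 * s1⁻¹)⁻¹ * s0 * (s1 * s0 * s1⁻¹) := by group
  -- conjugation by s1⁻¹
  have k1' : s1⁻¹ * s0 * s1 = s0 * c * s0⁻¹ := by
    rw [hc]
    have h : s0 * (s1 * s0 * s1 * s0 * s1⁻¹ * s0⁻¹ * s1⁻¹) * s0⁻¹ = s1⁻¹ * s0 * s1 := by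
      calc s0 * (s1 * s0 * s1 * s0 * s1⁻¹ * s0⁻¹ * s1⁻¹) * s0⁻¹
          = (s0 * s1 * s0 * s1 * s0) * (s1⁻¹ * s0⁻¹ * s1⁻¹ * s0⁻¹) := by group
        _ = s1⁻¹ * (s1⁻¹ * s0⁻¹ * s1⁻¹ * s0⁻¹) := by rw [e3]
        _ = s1⁻¹ * (s0 * s1 * s0 * s1)⁻¹ := by group
        _ = s1⁻¹ * (s1⁻¹ * s0⁻¹)⁻¹ := by rw [e4]
        _ = s1⁻¹ * s0 * s1 := by group
    rw [h]
  have k2' : s1⁻¹ * b * s1 = s0 := by rw [hb]; group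
  have k3' : s1⁻¹ * c * s1 = s0 * b * s0⁻¹ := by rw [hb, hc]; group
  -- s1³ in terms of the generators of H
  have kz : s1 ^ (3:ℕ) = b⁻¹ * c⁻¹ * s0⁻¹ := by
    rw [hb, hc]
    calc s1 ^ (3:ℕ) = s1 * s1 * s1 := by rw [pow_succ, pow_succ, pow_one]
      _ = s1 * s1 * (s0 * s1 * s0 * s1 * s0)⁻¹ * (s0 * s1 * s0 * s1 * s0) * s1 := by group
      _ = s1 * s1 * (s0 * s1 * s0 * s1 * s0)⁻¹ * s1⁻¹ * s1 := by rw [e3]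
      _ = (s1 * s0 * s1⁻¹)⁻¹ * (s1 * s0 * s1 * s0 * s1⁻¹ * s0⁻¹ * s1⁻¹)⁻¹ * s0⁻¹ := by
          group
  -- the free subgroup map
  set ρ : FreeGroup (Fin 3) →* PresentedGroup G2QuotRels :=
    FreeGroup.lift ![s0, b, c] with hρ
  have hρ0 : ρ (FreeGroup.of 0) = s0 := by rw [hρ, FreeGroup.lift_apply_of]; rfl
  have hρ1 : ρ (FreeGroup.of 1) = b := by rw [hρ, FreeGroup.lift_apply_of]; rfl
  have hρ2 : ρ (FreeGroup.of 2) = c := by rw [hρ, FreeGroup.lift_apply_of]; rfl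
  have hψρ : ∀ w, φ (ρ w) = FreeGroup.lift ![φ s0, φ b, φ c] w := by
    have h : φ.comp ρ = FreeGroup.lift ![φ s0, φ b, φ c] := by
      apply FreeGroup.ext_hom
      intro i
      rcases i with ⟨(_|_|_|n), hi⟩
      · show φ (ρ (FreeGroup.of 0)) = FreeGroup.lift ![φ s0, φ b, φ c] (FreeGroup.of 0)
        rw [hρ0, FreeGroup.lift_apply_of]; simp
      · show φ (ρ (FreeGroup.of 1)) = FreeGroup.lift ![φ s0, φ b, φ c] (FreeGroup.of 1)
        rw [hρ1, FreeGroup.lift_apply_of]; simp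
      · show φ (ρ (FreeGroup.of 2)) = FreeGroup.lift ![φ s0, φ b, φ c] (FreeGroup.of 2)
        rw [hρ2, FreeGroup.lift_apply_of]; simp
      · exact absurd hi (by omega)
    intro w
    exact DFunLike.congr_fun h w
  have hHker : ∀ u, φ (ρ u) = 1 → u = 1 := by
    intro u hu
    apply hfree
    rw [map_one, ← hψρ u]
    exact hu
  -- substitution homs
  set τ : FreeGroup (Fin 3) →* FreeGroup (Fin 3) :=
    FreeGroup.lift ![FreeGroup.of 1, (FreeGroup.of 1)⁻¹ * FreeGroup.of 2 * FreeGroup.of 1,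
      (FreeGroup.of 1)⁻¹ * FreeGroup.of 0 * FreeGroup.of 1] with hτ
  set τ' : FreeGroup (Fin 3) →* FreeGroup (Fin 3) :=
    FreeGroup.lift ![FreeGroup.of 0 * FreeGroup.of 2 * (FreeGroup.of 0)⁻¹, FreeGroup.of 0,
      FreeGroup.of 0 * FreeGroup.of 1 * (FreeGroup.of 0)⁻¹] with hτ'
  have hτ0 : τ (FreeGroup.of 0) = FreeGroup.of 1 := by rw [hτ, FreeGroup.lift_apply_of]; rfl
  have hτ1 : τ (FreeGroup.of 1) = (FreeGroup.of 1)⁻¹ * FreeGroup.of 2 * FreeGroup.of 1 := by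
    rw [hτ, FreeGroup.lift_apply_of]; rfl
  have hτ2 : τ (FreeGroup.of 2) = (FreeGroup.of 1)⁻¹ * FreeGroup.of 0 * FreeGroup.of 1 := by
    rw [hτ, FreeGroup.lift_apply_of]; rfl
  have hτ'0 : τ' (FreeGroup.of 0) = FreeGroup.of 0 * FreeGroup.of 2 * (FreeGroup.of 0)⁻¹ := by
    rw [hτ', FreeGroup.lift_apply_of]; rfl
  have hτ'1 : τ' (FreeGroup.of 1) = FreeGroup.of 0 := by rw [hτ', FreeGroup.lift_apply_of]; rfl
  have hτ'2 : τ' (FreeGroup.of 2) = FreeGroup.of 0 * FreeGroup.of 1 * (FreeGroup.of 0)⁻¹ := by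
    rw [hτ', FreeGroup.lift_apply_of]; rfl
  -- conjugation formulas for the subgroup H = range ρ
  have hconj : ∀ w, s1 * ρ w * s1⁻¹ = ρ (τ w) := by
    intro w
    induction w using FreeGroup.induction_on with
    | C1 => simp
    | of i =>
      rcases i with ⟨(_|_|_|n), hi⟩
      · show s1 * ρ (FreeGroup.of 0) * s1⁻¹ = ρ (τ (FreeGroup.of 0))
        rw [hρ0, hτ0, hρ1]
      · show s1 * ρ (FreeGroup.of 1) * s1⁻¹ = ρ (τ (FreeGroup.of 1))
        rw [hρ1, hτ1, map_mul, map_mul, map_inv, hρ1, hρ2]; exact k2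
      · show s1 * ρ (FreeGroup.of 2) * s1⁻¹ = ρ (τ (FreeGroup.of 2))
        rw [hρ2, hτ2, map_mul, map_mul, map_inv, hρ1, hρ0]; exact k3
      · exact absurd hi (by omega)
    | inv_of i ih =>
      simp only [map_inv]
      rw [← ih]
      group
    | mul x y ihx ihy =>
      rw [map_mul, map_mul, map_mul, ← ihx, ← ihy]
      group
  have hconj' : ∀ w, s1⁻¹ * ρ w * s1 = ρ (τ' w) := by
    intro w
    induction w using FreeGroup.induction_on with
    | C1 => simp
    | of i =>
      rcases i with ⟨(_|_|_|n), hi⟩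
      · show s1⁻¹ * ρ (FreeGroup.of 0) * s1 = ρ (τ' (FreeGroup.of 0))
        rw [hρ0, hτ'0, map_mul, map_mul, map_inv, hρ0, hρ2]; exact k1'
      · show s1⁻¹ * ρ (FreeGroup.of 1) * s1 = ρ (τ' (FreeGroup.of 1))
        rw [hρ1, hτ'1, hρ0]; exact k2'
      · show s1⁻¹ * ρ (FreeGroup.of 2) * s1 = ρ (τ' (FreeGroup.of 2))
        rw [hρ2, hτ'2, map_mul, map_mul, map_inv, hρ0, hρ1]; exact k3'
      · exact absurd hi (by omega)
    | inv_of i ih =>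
      simp only [map_inv]
      rw [← ih]
      group
    | mul x y ihx ihy =>
      rw [map_mul, map_mul, map_mul, ← ihx, ← ihy]
      group
  have hconjz : ∀ (n : ℤ) (v : FreeGroup (Fin 3)),
      ∃ u, s1 ^ n * ρ v * (s1 ^ n)⁻¹ = ρ u := by
    intro n
    induction n using Int.induction_on with
    | zero => exact fun v => ⟨v, by simp⟩
    | succ i ih =>
      intro v
      obtain ⟨u, hu⟩ := ih (τ v)
      refine ⟨u, ?_⟩
      rw [← hu, ← hconj v]
      try group
    | pred i ih =>
      intro v
      obtain ⟨u, hu⟩ := ih (τ' v)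
      refine ⟨u, ?_⟩
      rw [← hu, ← hconj' v]
      try group
  -- decomposition of an arbitrary element
  have decomp : ∀ g : PresentedGroup G2QuotRels,
      ∃ (w : FreeGroup (Fin 3)) (n : ℤ), g = ρ w * s1 ^ n := by
    intro g
    have hg : g ∈ Subgroup.closure
        (Set.range (PresentedGroup.of : Fin 2 → PresentedGroup G2QuotRels)) := by
      rw [PresentedGroup.closure_range_of]; trivial
    induction hg using Subgroup.closure_induction with
    | mem x hx =>
      obtain ⟨i, rfl⟩ := hx
      fin_cases i
      · exact ⟨FreeGroup.of 0, 0, by rw [zpow_zero, mul_one, hρ0, hs0]; rfl⟩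
      · exact ⟨1, 1, by rw [map_one, one_mul, zpow_one, hs1]; rfl⟩
    | one => exact ⟨1, 0, by simp⟩
    | mul x y hx hy ihx ihy =>
      obtain ⟨w, n, rfl⟩ := ihx
      obtain ⟨v, m, rfl⟩ := ihy
      obtain ⟨u, hu⟩ := hconjz n v
      exact ⟨w * u, n + m, by rw [map_mul, ← hu]; group⟩
    | inv x hx ihx =>
      obtain ⟨w, n, rfl⟩ := ihx
      obtain ⟨u, hu⟩ := hconjz (-n) w⁻¹
      rw [map_inv] at hu
      exact ⟨u, -n, by rw [← hu]; group⟩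
  -- exponent-counting homomorphism
  set χ : FreeGroup (Fin 3) →* Multiplicative ℤ :=
    FreeGroup.lift (fun i => if i = 0 then Multiplicative.ofAdd (1:ℤ) else 1) with hχ
  -- main argument
  rw [injective_iff_map_eq_one]
  intro k hk
  obtain ⟨w, n, rfl⟩ := decomp k
  have h3z : s1 ^ (3:ℤ)
      = ρ ((FreeGroup.of 1)⁻¹ * (FreeGroup.of 2)⁻¹ * (FreeGroup.of 0)⁻¹) := by
    rw [map_mul, map_mul, map_inv, map_inv, map_inv, hρ0, hρ1, hρ2, ← kz]
    rw [show (3:ℤ) = ((3:ℕ):ℤ) from rfl, zpow_natCast]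
  have hks : ρ w * s1 ^ n
      = ρ (w * ((FreeGroup.of 1)⁻¹ * (FreeGroup.of 2)⁻¹ * (FreeGroup.of 0)⁻¹) ^ (n / 3))
        * s1 ^ (n % 3) := by
    rw [map_mul, map_zpow, ← h3z, mul_assoc, ← zpow_mul, ← zpow_add]
    congr 2
    omega
  have key : ∀ (v : FreeGroup (Fin 3)) (r : ℤ), 0 ≤ r → r < 3 →
      φ (ρ v * s1 ^ r) = 1 → ρ v * s1 ^ r = 1 := by
    intro v r h0 h3 hkr
    interval_cases r
    · rw [zpow_zero, mul_one] at hkr ⊢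
      rw [hHker v hkr, map_one]
    · exfalso
      have hb1 : s1 ^ (1:ℤ) * s0 * (s1 ^ (1:ℤ))⁻¹ = ρ (FreeGroup.of 1) := by
        rw [zpow_one, hρ1]
      have hcom : φ (ρ (v * FreeGroup.of 1 * v⁻¹ * (FreeGroup.of 0)⁻¹)) = 1 := by
        have heq : ρ (v * FreeGroup.of 1 * v⁻¹ * (FreeGroup.of 0)⁻¹)
            = (ρ v * s1 ^ (1:ℤ)) * s0 * (ρ v * s1 ^ (1:ℤ))⁻¹ * s0⁻¹ := by
          rw [map_mul, map_mul, map_mul, map_inv, map_inv, hρ0, ← hb1]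
          group
        rw [heq, map_mul, map_mul, map_mul, map_inv, map_inv, hkr]
        group
      have h1 : v * FreeGroup.of 1 * v⁻¹ * (FreeGroup.of 0)⁻¹ = 1 := hHker _ hcom
      have h2 := congrArg χ h1
      simp [hχ, map_mul, map_inv, FreeGroup.lift_apply_of] at h2
    · exfalso
      have hb2 : s1 ^ (2:ℤ) * s0 * (s1 ^ (2:ℤ))⁻¹
          = ρ ((FreeGroup.of 1)⁻¹ * FreeGroup.of 2 * FreeGroup.of 1) := by
        rw [map_mul, map_mul, map_inv, hρ1, hρ2]
        calc s1 ^ (2:ℤ) * s0 * (s1 ^ (2:ℤ))⁻¹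
            = s1 * (s1 * s0 * s1⁻¹) * s1⁻¹ := by
              rw [show (2:ℤ) = 1 + 1 from rfl, zpow_add, zpow_one]; group
          _ = s1 * b * s1⁻¹ := by rw [k1]
          _ = b⁻¹ * c * b := k2
      have hcom : φ (ρ (v * ((FreeGroup.of 1)⁻¹ * FreeGroup.of 2 * FreeGroup.of 1)
          * v⁻¹ * (FreeGroup.of 0)⁻¹)) = 1 := by
        have heq : ρ (v * ((FreeGroup.of 1)⁻¹ * FreeGroup.of 2 * FreeGroup.of 1)
              * v⁻¹ * (FreeGroup.of 0)⁻¹)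
            = (ρ v * s1 ^ (2:ℤ)) * s0 * (ρ v * s1 ^ (2:ℤ))⁻¹ * s0⁻¹ := by
          rw [map_mul, map_mul, map_mul, map_inv, map_inv, hρ0, ← hb2]
          group
        rw [heq, map_mul, map_mul, map_mul, map_inv, map_inv, hkr]
        group
      have h1 : v * ((FreeGroup.of 1)⁻¹ * FreeGroup.of 2 * FreeGroup.of 1)
          * v⁻¹ * (FreeGroup.of 0)⁻¹ = 1 := hHker _ hcom
      have h2 := congrArg χ h1
      simp [hχ, map_mul, map_inv, FreeGroup.lift_apply_of] at h2
  rw [hks] at hk ⊢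
  exact key _ _ (Int.emod_nonneg n (by norm_num)) (Int.emod_lt_of_pos n (by norm_num)) hk
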